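/- Let Q be symmetric positive definite, A a matrix, and Π symmetric positive definite. Then Aᵀ (Q + A Π Aᵀ)⁻¹ A ≤ Π⁻¹ in the Loewner order. -/

import Mathlib

open Matrix

theorem information_bound_loewner {m n : ℕ}
    (A : Matrix (Fin m) (Fin n) ℝ)
    (Q : Matrix (Fin m) (Fin m) ℝ) (hQ : Q.PosDef)
    (Pm : Matrix (Fin n) (Fin n) ℝ) (hPm : Pm.PosDef) :
    (Pm⁻¹ - Aᵀ * (Q + A * Pm * Aᵀ)⁻¹ * A).PosSemidef := by
  have hS : (Q + A * Pm * Aᵀ).PosDef := by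
    have : (A * Pm * Aᵀ).PosSemidef := by
      have := hPm.posSemidef.mul_mul_conjTranspose_same A
      simpa [Matrix.conjTranspose_eq_transpose_of_trivial] using this
    exact hQ.add_posSemidef this
  have hPminv : (Pm⁻¹).PosDef := hPm.inv
  haveI : Invertible (Q + A * Pm * Aᵀ) := hS.isUnit.invertible
  haveI : Invertible (Pm⁻¹) := hPminv.isUnit.invertible
  have hAT : Aᴴ = Aᵀ := by ext i j; simp [Matrix.conjTranspose]
  have h1 : (fromBlocks (Q + A * Pm * Aᵀ) A Aᴴ Pm⁻¹).PosSemidef := by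
    rw [Matrix.PosDef.fromBlocks₂₂ _ _ hPminv, hAT]
    have : Q + A * Pm * Aᵀ - A * Pm⁻¹⁻¹ * Aᵀ = Q := by
      rw [Matrix.nonsing_inv_nonsing_inv _ (Matrix.isUnit_iff_isUnit_det _ |>.1 hPm.isUnit)]
      abel
    rw [this]
    exact hQ.posSemidef
  rw [Matrix.PosDef.fromBlocks₁₁ _ _ hS] at h1
  rwa [hAT] at h1
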